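/- Fix powers of two n and k1 with 2k1 ≤ n and a parameter F ≥ 2, and let G be an (n, n/k1, F)-flat filter. Then for every f ∈ [n] and every integer j' with 0 < |j'| ≤ n/(4k1): |Ĝ_f|^{1/2} · |Ĝ_{f − 2k1·j'}|^{1/2} ≤ (1/2)^{F−1} / |j'|^{(F−1)/2}. -/
import Mathlib


open Finset

/-- Discrete Fourier transform of a length-`n` signal, with `1/n` normalization. -/
noncomputable def dft (n : ℕ) [NeZero n] (X : ZMod n → ℂ) : ZMod n → ℂ :=
  fun f => (n : ℂ)⁻¹ * ∑ t : ZMod n, X t *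
    Complex.exp (-(2 * Real.pi * Complex.I) * ((f * t).val : ℂ) / (n : ℂ))

/-- Circular (modulo-`n`) distance of an index to `0`. -/
def cdist (n : ℕ) (x : ZMod n) : ℕ := min x.val (n - x.val)

/-- The (real) Fourier transform of a real-valued filter. -/
noncomputable def fhat (n : ℕ) [NeZero n] (G : ZMod n → ℝ) (f : ZMod n) : ℝ :=
  (dft n (fun t => ((G t : ℝ) : ℂ)) f).re

/-- `G` is an `(n,B,F)`-flat filter. -/
structure IsFlatFilter (n B F : ℕ) [NeZero n] (G : ZMod n → ℝ) : Prop where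
  realFT : ∀ f, (dft n (fun t => ((G t : ℝ) : ℂ)) f).im = 0
  symm : ∀ f, fhat n G (-f) = fhat n G f
  nonneg : ∀ f, 0 ≤ fhat n G f
  le_one : ∀ f, fhat n G f ≤ 1
  pass : ∀ f : ZMod n, (cdist n f : ℝ) ≤ (n : ℝ) / (2 * B) →
    1 - (1 / 4 : ℝ) ^ (F - 1) ≤ fhat n G f
  decay : ∀ f : ZMod n, (n : ℝ) / B ≤ (cdist n f : ℝ) →
    fhat n G f ≤ (1 / 4 : ℝ) ^ (F - 1) * ((n : ℝ) / (B * cdist n f)) ^ (F - 1)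

lemma cdist_eq_natAbs_valMinAbs (n : ℕ) [NeZero n] (x : ZMod n) :
    cdist n x = x.valMinAbs.natAbs :=
  (ZMod.valMinAbs_natAbs_eq_min x).symm

/-- If `cdist n x ≥ k1 * J`, the decay estimate at `x` together with the trivial bound at `y`
gives the product bound. -/
lemma key_bound (n k1 F : ℕ) [NeZero n] (hF : 2 ≤ F) (hk1 : 0 < k1) (hdvd : k1 ∣ n)
    (G : ZMod n → ℝ) (hG : IsFlatFilter n (n / k1) F G)
    (J : ℕ) (hJ : 1 ≤ J) (x y : ZMod n) (hc : k1 * J ≤ cdist n x) :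
    fhat n G x * fhat n G y ≤ (1 / 4 : ℝ) ^ (F - 1) / (J : ℝ) ^ (F - 1) := by
  have hnpos : 0 < n := Nat.pos_of_ne_zero (NeZero.ne n)
  have hBpos : 0 < n / k1 := Nat.div_pos (Nat.le_of_dvd hnpos hdvd) hk1
  have hBk : ((n / k1 : ℕ) : ℝ) * (k1 : ℝ) = (n : ℝ) := by
    rw [← Nat.cast_mul, Nat.div_mul_cancel hdvd]
  have hBR : (0 : ℝ) < ((n / k1 : ℕ) : ℝ) := by exact_mod_cast hBpos
  have hcR : (k1 : ℝ) * (J : ℝ) ≤ (cdist n x : ℝ) := by exact_mod_cast hc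
  have hk1R : (0 : ℝ) < (k1 : ℝ) := by exact_mod_cast hk1
  have hJR : (1 : ℝ) ≤ (J : ℝ) := by exact_mod_cast hJ
  have hcpos : (0 : ℝ) < (cdist n x : ℝ) := lt_of_lt_of_le (by nlinarith) hcR
  have hnB : (n : ℝ) / ((n / k1 : ℕ) : ℝ) = (k1 : ℝ) := by
    rw [div_eq_iff (ne_of_gt hBR)]; linarith [hBk]
  have hdec := hG.decay x (by rw [hnB]; nlinarith)
  have hfrac : (n : ℝ) / (((n / k1 : ℕ) : ℝ) * (cdist n x : ℝ)) ≤ 1 / (J : ℝ) := by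
    rw [div_le_div_iff₀ (by positivity) (by linarith)]
    nlinarith
  have hfrac0 : (0 : ℝ) ≤ (n : ℝ) / (((n / k1 : ℕ) : ℝ) * (cdist n x : ℝ)) := by positivity
  have hx : fhat n G x ≤ (1 / 4 : ℝ) ^ (F - 1) * (1 / (J : ℝ)) ^ (F - 1) := by
    refine hdec.trans ?_
    exact mul_le_mul_of_nonneg_left (pow_le_pow_left₀ hfrac0 hfrac _) (by positivity)
  calc fhat n G x * fhat n G y ≤ ((1 / 4 : ℝ) ^ (F - 1) * (1 / (J : ℝ)) ^ (F - 1)) * 1 :=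
        mul_le_mul hx (hG.le_one y) (hG.nonneg y) (by positivity)
    _ = (1 / 4 : ℝ) ^ (F - 1) / (J : ℝ) ^ (F - 1) := by
        rw [mul_one]; ring

/-- For an `(n, n/k1, F)`-flat filter `G`, every `f ∈ [n]` and every integer `j'` with
`0 < |j'| ≤ n/(4k1)`:
`|Ĝ_f|^{1/2}·|Ĝ_{f − 2k1·j'}|^{1/2} ≤ (1/2)^{F−1} / |j'|^{(F−1)/2}`. -/
theorem flat_filter_product_decay (n k1 F : ℕ) [NeZero n]
    (hn : ∃ a, n = 2 ^ a) (hk1 : ∃ a, k1 = 2 ^ a) (hkn : 2 * k1 ≤ n) (hF : 2 ≤ F)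
    (G : ZMod n → ℝ) (hG : IsFlatFilter n (n / k1) F G)
    (f : ZMod n) (j' : ℤ) (hj0 : j' ≠ 0) (hj : (|j'| : ℝ) ≤ (n : ℝ) / (4 * k1)) :
    Real.sqrt |fhat n G f| *
        Real.sqrt |fhat n G (f - ((2 * k1 : ℕ) : ZMod n) * (j' : ZMod n))| ≤
      (1 / 2 : ℝ) ^ (F - 1) / (|j'| : ℝ) ^ (((F : ℝ) - 1) / 2) := by
  obtain ⟨a, hna⟩ := hn
  obtain ⟨b, hkb⟩ := hk1
  have hk1pos : 0 < k1 := by rw [hkb]; positivity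
  have hnpos : 0 < n := Nat.pos_of_ne_zero (NeZero.ne n)
  have hdvd : k1 ∣ n := by
    have hba : b ≤ a := by
      have h2 : (2:ℕ) ^ b ≤ 2 ^ a := by rw [← hna, ← hkb]; omega
      exact (Nat.pow_le_pow_iff_right (by norm_num)).mp h2
    rw [hna, hkb]; exact pow_dvd_pow 2 hba
  set J : ℕ := j'.natAbs with hJdef
  have hJ1 : 1 ≤ J := Int.natAbs_pos.mpr hj0
  have hJcast : ((J : ℕ) : ℝ) = (|j'| : ℝ) := by
    simp [hJdef, Nat.cast_natAbs]
  -- integer difference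
  set g : ZMod n := f - ((2 * k1 : ℕ) : ZMod n) * (j' : ZMod n) with hgdef
  -- the bound `2 * (2*k1*J) ≤ n`
  have hjn : 2 * (2 * k1 * J) ≤ n := by
    have hk1R : (0 : ℝ) < (k1 : ℝ) := by exact_mod_cast hk1pos
    have h4 : (4 : ℝ) * (k1 : ℝ) * (|j'| : ℝ) ≤ (n : ℝ) := by
      rw [le_div_iff₀ (show (0:ℝ) < 4 * (k1:ℝ) by positivity)] at hj
      nlinarith [hj]
    have : ((2 * (2 * k1 * J) : ℕ) : ℝ) ≤ (n : ℝ) := by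
      push_cast
      rw [hJcast]
      nlinarith
    exact_mod_cast this
  -- cdist f + cdist g ≥ 2*k1*J
  have hsum : 2 * k1 * J ≤ cdist n f + cdist n g := by
    have hD : (((2 * k1 * j' : ℤ)) : ZMod n) = ((f.valMinAbs - g.valMinAbs : ℤ) : ZMod n) := by
      push_cast [ZMod.coe_valMinAbs]
      rw [hgdef]
      push_cast
      ring
    have hDabs : (2 * k1 * j' : ℤ).natAbs = 2 * k1 * J := by
      simp [Int.natAbs_mul, hJdef]
    have hle : (2 * k1 * j' : ℤ).natAbs ≤ n / 2 := by
      rw [Nat.le_div_iff_mul_le (by norm_num)]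
      omega
    have hmin := ZMod.natAbs_min_of_le_div_two n _ _ hD hle
    have htri : (f.valMinAbs - g.valMinAbs).natAbs ≤ f.valMinAbs.natAbs + g.valMinAbs.natAbs :=
      Int.natAbs_sub_le _ _
    rw [cdist_eq_natAbs_valMinAbs, cdist_eq_natAbs_valMinAbs]
    omega
  -- product bound
  rw [mul_assoc] at hsum
  have hprod : fhat n G f * fhat n G g ≤ (1 / 4 : ℝ) ^ (F - 1) / (J : ℝ) ^ (F - 1) := by
    rcases le_total (cdist n f) (cdist n g) with h | h
    · rw [mul_comm]
      exact key_bound n k1 F hF hk1pos hdvd G hG J hJ1 g f (by omega)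
    · exact key_bound n k1 F hF hk1pos hdvd G hG J hJ1 f g (by omega)
  -- finish
  have hJR : (1 : ℝ) ≤ (J : ℝ) := by exact_mod_cast hJ1
  rw [abs_of_nonneg (hG.nonneg f), abs_of_nonneg (hG.nonneg g), ← Real.sqrt_mul (hG.nonneg f)]
  have hsq : Real.sqrt ((1 / 4 : ℝ) ^ (F - 1) / (J : ℝ) ^ (F - 1)) =
      (1 / 2 : ℝ) ^ (F - 1) / (J : ℝ) ^ (((F : ℝ) - 1) / 2) := by
    have h1 : ((1 / 4 : ℝ)) ^ (F - 1) = ((1 / 2 : ℝ) ^ (F - 1)) ^ 2 := by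
      rw [← pow_mul, mul_comm (F-1) 2, pow_mul]; norm_num
    have h2 : Real.sqrt ((J : ℝ) ^ (F - 1)) = (J : ℝ) ^ (((F : ℝ) - 1) / 2) := by
      rw [Real.sqrt_eq_rpow, ← Real.rpow_natCast (J : ℝ) (F - 1),
        ← Real.rpow_mul (by positivity)]
      congr 1
      rw [Nat.cast_sub (by omega), Nat.cast_one]
      ring
    rw [h1, Real.sqrt_div (by positivity), Real.sqrt_sq (by positivity), h2]
  calc Real.sqrt (fhat n G f * fhat n G g)
      ≤ Real.sqrt ((1 / 4 : ℝ) ^ (F - 1) / (J : ℝ) ^ (F - 1)) := Real.sqrt_le_sqrt hprod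
    _ = (1 / 2 : ℝ) ^ (F - 1) / (J : ℝ) ^ (((F : ℝ) - 1) / 2) := hsq
    _ = (1 / 2 : ℝ) ^ (F - 1) / (|j'| : ℝ) ^ (((F : ℝ) - 1) / 2) := by rw [hJcast]
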